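/- For any two sequences σ1 (with last visit u) and σ2 (with first visit v), the minimum active duration of the concatenation satisfies D(σ1 ⊕ σ2) = D(σ1) + d_{u v} + D(σ2) + Δ_WT, where δ = D(σ1) − TW(σ1) + d_{u v} and Δ_WT = max(E(σ2) − δ − L(σ1), 0). -/
import Mathlib


variable {V : Type*}

/-- Service start time at a visit: `h = max(a v, min(τ, b v))`. -/
noncomputable def svcStart (a b : V → ℝ) (v : V) (t : ℝ) : ℝ :=
  max (a v) (min t (b v))

/-- Completion time `C(σ, t)` of the forward schedule of `σ` started at `t`. -/
noncomputable def comp (a b s : V → ℝ) (d : V → V → ℝ) : List V → ℝ → ℝ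
  | [], t => t
  | [v], t => svcStart a b v t + s v
  | v :: w :: rest, t => comp a b s d (w :: rest) (svcStart a b v t + s v + d v w)

/-- Total time warp `W(σ, t)` of the forward schedule of `σ` started at `t`. -/
noncomputable def warp (a b s : V → ℝ) (d : V → V → ℝ) : List V → ℝ → ℝ
  | [], _ => 0
  | [v], t => max (t - b v) 0
  | v :: w :: rest, t =>
      max (t - b v) 0 + warp a b s d (w :: rest) (svcStart a b v t + s v + d v w)

/-- Active duration `A(σ, t) = C(σ, t) − t + W(σ, t)`. -/
noncomputable def activeDur (a b s : V → ℝ) (d : V → V → ℝ) (σ : List V) (t : ℝ) : ℝ :=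
  comp a b s d σ t - t + warp a b s d σ t

/-- Minimum time warp `TW(σ) = min_t W(σ, t)`. -/
noncomputable def TWv (a b s : V → ℝ) (d : V → V → ℝ) (σ : List V) : ℝ :=
  sInf (Set.range fun t => warp a b s d σ t)

/-- Latest start time achieving the minimum time warp: `L(σ) = max {t : W(σ,t) = TW(σ)}`. -/
noncomputable def Lv (a b s : V → ℝ) (d : V → V → ℝ) (σ : List V) : ℝ :=
  sSup {t | warp a b s d σ t = TWv a b s d σ}

/-- Minimum active duration `D(σ) = min_t A(σ, t)`. -/
noncomputable def Dv (a b s : V → ℝ) (d : V → V → ℝ) (σ : List V) : ℝ :=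
  sInf (Set.range fun t => activeDur a b s d σ t)

/-- Earliest start time achieving the minimum duration: `E(σ) = min {t : A(σ,t) = D(σ)}`. -/
noncomputable def Ev (a b s : V → ℝ) (d : V → V → ℝ) (σ : List V) : ℝ :=
  sInf {t | activeDur a b s d σ t = Dv a b s d σ}

-- elementary real identities
lemma clampId (E1 L1 t : ℝ) (h : E1 ≤ L1) :
    t + max (E1 - t) 0 - max (t - L1) 0 = max E1 (min t L1) := by
  simp only [max_def, min_def]; split_ifs <;> linarith

lemma idA (E1 L1 X t : ℝ) (h : E1 ≤ L1) :
    max (E1 - t) 0 + max (X - max E1 (min t L1)) 0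
      = max (X - L1) 0 + max (max E1 (min X L1) - t) 0 := by
  simp only [max_def, min_def]; split_ifs <;> linarith

lemma idB (E1 L1 Y t : ℝ) (h : E1 ≤ L1) :
    max (t - L1) 0 + max (max E1 (min t L1) - Y) 0
      = max (E1 - Y) 0 + max (t - max E1 (min Y L1)) 0 := by
  simp only [max_def, min_def]; split_ifs <;> linarith

section Canon
variable (a b s : V → ℝ) (d : V → V → ℝ)

def Canon (σ : List V) (D E TW L : ℝ) : Prop :=
  E ≤ L ∧ (∀ t, activeDur a b s d σ t = D + max (E - t) 0) ∧
    (∀ t, warp a b s d σ t = TW + max (t - L) 0)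

lemma comp_append : ∀ (l : List V) (x : V) (u : V), (x :: l).getLast? = some u →
    ∀ (w : V) (l2 : List V) (t : ℝ),
    comp a b s d ((x :: l) ++ w :: l2) t
      = comp a b s d (w :: l2) (comp a b s d (x :: l) t + d u w)
  | [], x, u, hu, w, l2, t => by
      simp only [List.getLast?_singleton, Option.some.injEq] at hu
      subst hu; rfl
  | y :: l, x, u, hu, w, l2, t => by
      have h2 : (y :: l).getLast? = some u := by
        rwa [List.getLast?_cons_cons] at hu
      have := comp_append l y u h2 w l2 (svcStart a b x t + s x + d x y)
      simpa [comp] using this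

lemma warp_append : ∀ (l : List V) (x : V) (u : V), (x :: l).getLast? = some u →
    ∀ (w : V) (l2 : List V) (t : ℝ),
    warp a b s d ((x :: l) ++ w :: l2) t
      = warp a b s d (x :: l) t + warp a b s d (w :: l2) (comp a b s d (x :: l) t + d u w)
  | [], x, u, hu, w, l2, t => by
      simp only [List.getLast?_singleton, Option.some.injEq] at hu
      subst hu; rfl
  | y :: l, x, u, hu, w, l2, t => by
      have h2 : (y :: l).getLast? = some u := by
        rwa [List.getLast?_cons_cons] at hu
      have := warp_append l y u h2 w l2 (svcStart a b x t + s x + d x y)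
      simp only [List.cons_append, List.append_eq, warp, comp] at *
      rw [this]; ring

end Canon

section Canon2
variable (a b s : V → ℝ) (d : V → V → ℝ)

lemma canon_single (hab : ∀ v, a v ≤ b v) (v : V) :
    Canon a b s d [v] (s v) (a v) 0 (b v) := by
  refine ⟨hab v, fun t => ?_, fun t => ?_⟩
  · show svcStart a b v t + s v - t + max (t - b v) 0 = s v + max (a v - t) 0
    have := hab v
    simp only [svcStart, max_def, min_def]; split_ifs <;> linarith
  · show max (t - b v) 0 = 0 + max (t - b v) 0
    ring

lemma comp_eq (σ : List V) (t : ℝ) :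
    comp a b s d σ t = activeDur a b s d σ t + t - warp a b s d σ t := by
  simp [activeDur]; ring

lemma canon_append (x : V) (l : List V) (u w : V) (l2 : List V)
    (hu : (x :: l).getLast? = some u)
    {D1 E1 TW1 L1 D2 E2 TW2 L2 : ℝ}
    (h1 : Canon a b s d (x :: l) D1 E1 TW1 L1)
    (h2 : Canon a b s d (w :: l2) D2 E2 TW2 L2) :
    Canon a b s d ((x :: l) ++ w :: l2)
      (D1 + d u w + D2 + max (E2 - (D1 - TW1 + d u w) - L1) 0)
      (max E1 (min (E2 - (D1 - TW1 + d u w)) L1))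
      (TW1 + TW2 + max (E1 - (L2 - (D1 - TW1 + d u w))) 0)
      (max E1 (min (L2 - (D1 - TW1 + d u w)) L1)) := by
  obtain ⟨hEL1, hA1, hW1⟩ := h1
  obtain ⟨hEL2, hA2, hW2⟩ := h2
  set δ : ℝ := D1 - TW1 + d u w with hδ
  have hg : ∀ t, comp a b s d (x :: l) t + d u w = δ + max E1 (min t L1) := by
    intro t
    rw [comp_eq, hA1, hW1, ← clampId E1 L1 t hEL1]
    ring
  refine ⟨max_le_max le_rfl (min_le_min (by linarith) le_rfl), fun t => ?_, fun t => ?_⟩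
  · have hcomp := comp_append a b s d l x u hu w l2 t
    have hwarp := warp_append a b s d l x u hu w l2 t
    have : activeDur a b s d ((x :: l) ++ w :: l2) t
        = activeDur a b s d (x :: l) t + d u w
          + activeDur a b s d (w :: l2) (comp a b s d (x :: l) t + d u w) := by
      simp only [activeDur, hcomp, hwarp]; ring
    rw [this, hA1, hA2, hg t]
    have := idA E1 L1 (E2 - δ) t hEL1
    have e1 : E2 - (δ + max E1 (min t L1)) = E2 - δ - max E1 (min t L1) := by ring
    rw [e1]
    linarith
  · have hwarp := warp_append a b s d l x u hu w l2 t
    rw [hwarp, hW1, hW2, hg t]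
    have := idB E1 L1 (L2 - δ) t hEL1
    have e1 : δ + max E1 (min t L1) - L2 = max E1 (min t L1) - (L2 - δ) := by ring
    rw [e1]
    linarith

lemma canon_exists (hab : ∀ v, a v ≤ b v) :
    ∀ (x : V) (l : List V), ∃ D E TW L, Canon a b s d (x :: l) D E TW L
  | x, [] => ⟨_, _, _, _, canon_single a b s d hab x⟩
  | x, y :: l => by
      obtain ⟨D2, E2, TW2, L2, h2⟩ := canon_exists hab y l
      exact ⟨_, _, _, _, canon_append a b s d x [] x y l (by simp)
        (canon_single a b s d hab x) h2⟩

end Canon2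


section Vals
variable (a b s : V → ℝ) (d : V → V → ℝ)

lemma inf_canonical (f : ℝ → ℝ) (D E : ℝ) (hf : ∀ t, f t = D + max (E - t) 0) :
    sInf (Set.range f) = D := by
  have hb : BddBelow (Set.range f) := by
    refine ⟨D, ?_⟩
    rintro x ⟨t, rfl⟩
    have := le_max_right (E - t) 0
    rw [hf t]; linarith
  apply le_antisymm
  · exact csInf_le hb ⟨E, by simp [hf]⟩
  · refine le_csInf ⟨f E, ⟨E, rfl⟩⟩ ?_
    rintro x ⟨t, rfl⟩
    have := le_max_right (E - t) 0
    rw [hf t]; linarith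

lemma inf_canonical' (f : ℝ → ℝ) (D L : ℝ) (hf : ∀ t, f t = D + max (t - L) 0) :
    sInf (Set.range f) = D := by
  have hb : BddBelow (Set.range f) := by
    refine ⟨D, ?_⟩
    rintro x ⟨t, rfl⟩
    have := le_max_right (t - L) 0
    rw [hf t]; linarith
  apply le_antisymm
  · exact csInf_le hb ⟨L, by simp [hf]⟩
  · refine le_csInf ⟨f L, ⟨L, rfl⟩⟩ ?_
    rintro x ⟨t, rfl⟩
    have := le_max_right (t - L) 0
    rw [hf t]; linarith

lemma Dv_eq {σ : List V} {D E TW L : ℝ} (h : Canon a b s d σ D E TW L) :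
    Dv a b s d σ = D :=
  inf_canonical _ D E h.2.1

lemma TWv_eq {σ : List V} {D E TW L : ℝ} (h : Canon a b s d σ D E TW L) :
    TWv a b s d σ = TW :=
  inf_canonical' _ TW L h.2.2

lemma Ev_eq {σ : List V} {D E TW L : ℝ} (h : Canon a b s d σ D E TW L) :
    Ev a b s d σ = E := by
  have hset : {t | activeDur a b s d σ t = Dv a b s d σ} = Set.Ici E := by
    rw [Dv_eq a b s d h]
    ext t
    simp only [Set.mem_setOf_eq, h.2.1 t, Set.mem_Ici]
    constructor
    · intro ht
      have h1 := le_max_left (E - t) 0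
      linarith
    · intro ht
      rw [max_eq_right (by linarith)]
      ring
  rw [Ev, hset, csInf_Ici]

lemma Lv_eq {σ : List V} {D E TW L : ℝ} (h : Canon a b s d σ D E TW L) :
    Lv a b s d σ = L := by
  have hset : {t | warp a b s d σ t = TWv a b s d σ} = Set.Iic L := by
    rw [TWv_eq a b s d h]
    ext t
    simp only [Set.mem_setOf_eq, h.2.2 t, Set.mem_Iic]
    constructor
    · intro ht
      have h1 := le_max_left (t - L) 0
      linarith
    · intro ht
      rw [max_eq_right (by linarith)]
      ring
  rw [Lv, hset, csSup_Iic]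

end Vals

/-- For sequences `σ₁` (with last visit `u`) and `σ₂` (with first visit `v`),
`D(σ₁ ⊕ σ₂) = D(σ₁) + d u v + D(σ₂) + Δ_WT` where `δ = D(σ₁) − TW(σ₁) + d u v` and
`Δ_WT = max(E(σ₂) − δ − L(σ₁), 0)`. -/
theorem concat_D [Fintype V]
    (a b s : V → ℝ) (d : V → V → ℝ)
    (hs : ∀ v, 0 ≤ s v) (hab : ∀ v, a v ≤ b v) (hd : ∀ u v, 0 ≤ d u v)
    (σ₁ σ₂ : List V) (u v : V)
    (hu : σ₁.getLast? = some u) (hv : σ₂.head? = some v) :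
    Dv a b s d (σ₁ ++ σ₂) =
      Dv a b s d σ₁ + d u v + Dv a b s d σ₂ +
        max (Ev a b s d σ₂ - (Dv a b s d σ₁ - TWv a b s d σ₁ + d u v) - Lv a b s d σ₁) 0 := by

  obtain ⟨x, l, rfl⟩ : ∃ x l, σ₁ = x :: l := by
    cases σ₁ with
    | nil => simp at hu
    | cons x l => exact ⟨x, l, rfl⟩
  obtain ⟨l2, rfl⟩ : ∃ l2, σ₂ = v :: l2 := by
    cases σ₂ with
    | nil => simp at hv
    | cons w l2 =>
        obtain rfl : w = v := by simpa using hv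
        exact ⟨l2, rfl⟩
  obtain ⟨D1, E1, TW1, L1, h1⟩ := canon_exists a b s d hab x l
  obtain ⟨D2, E2, TW2, L2, h2⟩ := canon_exists a b s d hab v l2
  have key := canon_append a b s d x l u v l2 hu h1 h2
  rw [Dv_eq a b s d key, Dv_eq a b s d h1, Dv_eq a b s d h2, TWv_eq a b s d h1,
    Lv_eq a b s d h1, Ev_eq a b s d h2]
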